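/- Let g_n, g be closed (lower semicontinuous) proper convex functions on ℝ with Int(dom(g)) ≠ ∅ and g_n → g pointwise on ℝ. Then g_n* → g* pointwise on the interior of dom(g*). -/

import Mathlib

open Filter Topology

/-- The effective domain of an `EReal`-valued function on `ℝ`. -/
def edom (g : ℝ → EReal) : Set ℝ := {x | g x ≠ ⊤}

/-- Convexity for `EReal`-valued functions on `ℝ`. -/
def Cvx (g : ℝ → EReal) : Prop :=
  ∀ x y a b : ℝ, 0 ≤ a → 0 ≤ b → a + b = 1 →
    g (a * x + b * y) ≤ (a : EReal) * g x + (b : EReal) * g y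

/-- The Legendre conjugate `g*(α) = sup_x (α x - g x)` of an `EReal`-valued function. -/
noncomputable def conjE (g : ℝ → EReal) (α : ℝ) : EReal :=
  ⨆ x : ℝ, ((α * x : ℝ) : EReal) - g x

/-- The left derivative `g⁻(x)`, as the supremum of slopes from the left. -/
noncomputable def leftD (g : ℝ → EReal) (x : ℝ) : ℝ :=
  sSup {r : ℝ | ∃ y < x, ((r * (x - y) : ℝ) : EReal) ≤ g x - g y}

/-- The right derivative `g⁺(x)`, as the infimum of slopes from the right. -/
noncomputable def rightD (g : ℝ → EReal) (x : ℝ) : ℝ :=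
  sInf {r : ℝ | ∃ y > x, g y - g x ≤ ((r * (y - x) : ℝ) : EReal)}

lemma le_conjE (g : ℝ → EReal) (α x : ℝ) : ((α * x : ℝ) : EReal) - g x ≤ conjE g α :=
  le_iSup (fun x => ((α * x : ℝ) : EReal) - g x) x

lemma conjE_ne_bot (g : ℝ → EReal) (α : ℝ) (hb : ∀ x, ⊥ < g x) (ht : ∃ x, g x ≠ ⊤) :
    conjE g α ≠ ⊥ := by
  obtain ⟨x, hx⟩ := ht
  refine ne_bot_of_le_ne_bot ?_ (le_conjE g α x)
  lift g x to ℝ using ⟨hx, (hb x).ne'⟩ with r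
  rw [← EReal.coe_sub]
  exact EReal.coe_ne_bot _

-- from conj bound: g0 x ≥ αx - c

lemma ge_affine (g : ℝ → EReal) (α c : ℝ) (hb : ∀ x, ⊥ < g x)
    (h : conjE g α ≤ (c : EReal)) (x : ℝ) : ((α * x - c : ℝ) : EReal) ≤ g x := by
  have h1 : ((α * x : ℝ) : EReal) - g x ≤ (c : EReal) := (le_conjE g α x).trans h
  have h2 : ((α * x : ℝ) : EReal) ≤ (c : EReal) + g x :=
    (EReal.sub_le_iff_le_add (.inl (hb x).ne') (.inr (EReal.coe_ne_bot c))).1 h1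
  rw [EReal.coe_sub]
  exact EReal.sub_le_of_le_add' h2

lemma exists_forall_ge (A B : ℝ) (hA : 0 < A) : ∃ Y : ℝ, ∀ x ≥ Y, 0 ≤ A * x + B := by
  refine ⟨(-B) / A, fun x hx => ?_⟩
  have := (div_le_iff₀ hA).1 hx
  nlinarith

-- existence of a point with slope > γ on the right of z0

lemma exists_slope_right (g : ℝ → EReal) (z0 v β γ : ℝ) (hz : g z0 = (v : EReal))
    (hγ : γ < β) (htop : conjE g β ≠ ⊤) :
    ∃ y > z0, ((v + γ * (y - z0) : ℝ) : EReal) < g y := by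
  by_contra hcon
  push_neg at hcon
  apply htop
  rw [conjE, iSup_eq_top]
  intro b hb
  obtain ⟨M, hMb⟩ : ∃ M : ℝ, b < (M : EReal) := EReal.exists_between_coe_real hb |>.imp
    fun M h => h.1
  obtain ⟨Y, hY⟩ := exists_forall_ge (β - γ) (-M - v + γ * z0 - 1) (by linarith)
  set x := max Y (z0 + 1) with hx
  have hxz : z0 < x := lt_of_lt_of_le (by linarith) (le_max_right _ _)
  have hgx : g x ≤ ((v + γ * (x - z0) : ℝ) : EReal) := hcon x hxz
  refine ⟨x, hMb.trans_le ?_⟩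
  have h1 : ((β * x : ℝ) : EReal) - ((v + γ * (x - z0) : ℝ) : EReal) ≤ ((β*x:ℝ):EReal) - g x :=
    EReal.sub_le_sub le_rfl hgx
  refine le_trans ?_ h1
  rw [← EReal.coe_sub, EReal.coe_le_coe_iff]
  have := hY x (le_max_left _ _)
  nlinarith

lemma tendsto_sub_const (c : ℝ) (u : ℕ → EReal) (l : EReal)
    (h : Tendsto u atTop (nhds l)) :
    Tendsto (fun n => (c : EReal) - u n) atTop (nhds ((c : EReal) - l)) := by
  have hneg : Tendsto (fun n => - u n) atTop (nhds (- l)) := h.neg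
  have hpair : Tendsto (fun n => (((c : EReal)), - u n)) atTop (nhds (((c : EReal)), - l)) :=
    tendsto_const_nhds.prodMk_nhds hneg
  have hadd := (EReal.continuousAt_add (p := (((c : EReal)), - l))
    (Or.inl (EReal.coe_ne_top c)) (Or.inl (EReal.coe_ne_bot c))).tendsto.comp hpair
  simpa [sub_eq_add_neg, Function.comp_def] using hadd

lemma lower_half (g : ℕ → ℝ → EReal) (g0 : ℝ → EReal) (α : ℝ)
    (hlim : ∀ x, Tendsto (fun n => g n x) atTop (nhds (g0 x))) :
    conjE g0 α ≤ liminf (fun n => conjE (g n) α) atTop := by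
  refine iSup_le fun x => ?_
  have ht := tendsto_sub_const (α * x) _ _ (hlim x)
  calc ((α*x:ℝ):EReal) - g0 x
      = liminf (fun n => ((α*x:ℝ):EReal) - g n x) atTop := ht.liminf_eq.symm
    _ ≤ liminf (fun n => conjE (g n) α) atTop :=
        liminf_le_liminf (Eventually.of_forall fun n => le_conjE _ _ _)

-- a linear function with positive slope eventually exceeds any bound

lemma conjE_neg (g : ℝ → EReal) (β : ℝ) : conjE (fun x => g (-x)) β = conjE g (-β) := by
  unfold conjE
  apply le_antisymm
  · refine iSup_le fun x => ?_
    have h : ((β * x : ℝ) : EReal) - g (-x) = ((-β * -x : ℝ) : EReal) - g (-x) := by norm_num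
    rw [h]
    exact le_iSup (fun y => ((-β * y : ℝ) : EReal) - g y) (-x)
  · refine iSup_le fun x => ?_
    have h : ((-β * x : ℝ) : EReal) - g x = ((β * -x : ℝ) : EReal) - g (- -x) := by
      rw [neg_neg]; norm_num
    rw [h]
    exact le_iSup (fun y => ((β * y : ℝ) : EReal) - g (-y)) (-x)

lemma coeff_facts (d μ t : ℝ) (hd : d ≠ 0) (hμ0 : 0 < μ) (hμ1 : μ ≤ 1/2)
    (ht : |t| ≤ μ * |d| / 2) :
    0 ≤ (μ*d - t)/(d - t) ∧ (μ*d - t)/(d - t) ≤ 3*μ ∧ 0 < ((1-μ)*d)/(d - t) ∧ d - t ≠ 0 := by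
  rcases abs_le.1 ht with ⟨ht1, ht2⟩
  rcases hd.lt_or_gt with hneg | hpos
  · have habs : |d| = -d := abs_of_neg hneg
    rw [habs] at ht1 ht2
    have h1 : d - t < 0 := by nlinarith
    have h2 : μ*d - t ≤ 0 := by nlinarith
    have h3 : (1-μ)*d < 0 := by nlinarith
    refine ⟨div_nonneg_of_nonpos h2 h1.le, ?_, div_pos_of_neg_of_neg h3 h1, by linarith⟩
    rw [div_le_iff_of_neg h1]
    nlinarith
  · have habs : |d| = d := abs_of_pos hpos
    rw [habs] at ht1 ht2
    have h1 : 0 < d - t := by nlinarith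
    have h2 : 0 ≤ μ*d - t := by nlinarith
    have h3 : 0 < (1-μ)*d := by nlinarith
    refine ⟨div_nonneg h2 h1.le, ?_, div_pos h3 h1, by linarith⟩
    rw [div_le_iff₀ h1]
    nlinarith

lemma farfield_right (g : ℕ → ℝ → EReal) (g0 : ℝ → EReal)
    (hconvn : ∀ n, Cvx (g n))
    (hlim : ∀ x, Tendsto (fun n => g n x) atTop (nhds (g0 x)))
    (z0 v : ℝ) (hz : g0 z0 = (v : EReal)) (α ε c : ℝ) (hε : 0 < ε)
    (htop : conjE g0 (α + ε) ≠ ⊤) :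
    ∃ Y : ℝ, ∀ᶠ n in atTop, ∀ x ≥ Y, ((α * x : ℝ) : EReal) - g n x ≤ (c : EReal) := by
  obtain ⟨y, hy, hslope⟩ := exists_slope_right g0 z0 v (α+ε) (α+ε/2) hz (by linarith) htop
  obtain ⟨L, hL1, hL2⟩ := EReal.exists_between_coe_real hslope
  rw [EReal.coe_lt_coe_iff] at hL1
  set G0 := L - (α+ε/4)*(y-z0) with hG0
  clear_value G0
  have hvG0 : v < G0 := by rw [hG0]; nlinarith
  have hev1 : ∀ᶠ n in atTop, (↑L : EReal) < g n y := (hlim y).eventually_const_lt hL2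
  have hev2 : ∀ᶠ n in atTop, g n z0 < (↑G0 : EReal) := (hlim z0).eventually_lt_const
    (by rw [hz]; exact_mod_cast hvG0)
  obtain ⟨Y0, hY0⟩ := exists_forall_ge ((ε/4)*(y-z0)) (-z0*L + y*G0 + c*(y-z0))
    (by nlinarith)
  refine ⟨max Y0 y, ?_⟩
  filter_upwards [hev1, hev2] with n h1 h2
  intro x hx
  have hxy : y ≤ x := le_trans (le_max_right _ _) hx
  have hxz : z0 < x := lt_of_lt_of_le hy hxy
  set a := (x - y)/(x - z0) with ha'
  set b := (y - z0)/(x - z0) with hb'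
  clear_value a b
  have hb : 0 < b := by rw [hb']; exact div_pos (by linarith) (by linarith)
  have ha : 0 ≤ a := by rw [ha']; exact div_nonneg (by linarith) (by linarith)
  have hne : x - z0 ≠ 0 := sub_ne_zero_of_ne (ne_of_gt hxz)
  have hab : a + b = 1 := by rw [ha', hb']; field_simp; ring
  have hcomb : a * z0 + b * x = y := by rw [ha', hb']; field_simp; ring
  have hcvx := hconvn n z0 x a b ha hb.le hab
  rw [hcomb] at hcvx
  have step1 : (↑L : EReal) ≤ ↑a * g n z0 + ↑b * g n x := le_trans h1.le hcvx
  have step2 : (↑a : EReal) * g n z0 ≤ ↑(a * G0) := by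
    rw [EReal.coe_mul]
    exact mul_le_mul_of_nonneg_left h2.le (by exact_mod_cast ha)
  have step3 : (↑L : EReal) ≤ ↑(a*G0) + ↑b * g n x :=
    step1.trans (add_le_add_left step2 _)
  have step4 : (↑(L - a*G0) : EReal) ≤ ↑b * g n x := by
    rw [EReal.coe_sub]
    exact EReal.sub_le_of_le_add' step3
  have key : (y - z0) * (α*x - c) ≤ (x - z0)*L - (x - y)*G0 := by
    have h7 := hY0 x (le_trans (le_max_left _ _) hx)
    have hx0 : x*L - x*G0 - x*((α+ε/4)*(y-z0)) = 0 := by rw [hG0]; ring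
    linarith [h7, hx0]
  have hax : a * (x - z0) = x - y := by rw [ha']; field_simp
  have hbx : b * (x - z0) = y - z0 := by rw [hb']; field_simp
  rw [← hbx, ← hax] at key
  have h6 : ((α*x - c) * b) * (x - z0) ≤ (L - a*G0) * (x - z0) := by nlinarith [key]
  have hreal : (α*x - c) * b ≤ L - a*G0 :=
    (mul_le_mul_iff_of_pos_right (by linarith : (0:ℝ) < x - z0)).1 h6
  have final : (↑(α*x - c) : EReal) ≤ g n x := by
    calc (↑(α*x - c) : EReal) ≤ ↑((L - a*G0)/b) := by
          rw [EReal.coe_le_coe_iff, le_div_iff₀ hb]; exact hreal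
      _ ≤ g n x := by
          rw [EReal.coe_div, EReal.div_le_iff_le_mul (by exact_mod_cast hb) (EReal.coe_ne_top b)]
          exact step4
  have h5 : ((α*x : ℝ) : EReal) ≤ g n x + (c : EReal) := by
    have := add_le_add_left final ((c : ℝ) : EReal)
    rw [← EReal.coe_add] at this
    have heq : (α*x - c) + c = α * x := by ring
    rwa [heq] at this
  exact EReal.sub_le_of_le_add' h5

lemma local_bound (g : ℕ → ℝ → EReal) (g0 : ℝ → EReal)
    (hconvn : ∀ n, Cvx (g n)) (hlsc : LowerSemicontinuous g0)
    (hlim : ∀ x, Filter.Tendsto (fun n => g n x) atTop (nhds (g0 x)))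
    (z1 v1 : ℝ) (hz1 : g0 z1 = (v1 : EReal))
    (α c δ : ℝ) (hδ : 0 < δ)
    (hge : ∀ x, ((α * x - c : ℝ) : EReal) ≤ g0 x)
    (xb : ℝ) (hne : z1 ≠ xb) :
    ∃ U ∈ 𝓝 xb, ∀ᶠ n in atTop, ∀ x ∈ U,
      ((α * x : ℝ) : EReal) - g n x ≤ ((c + δ : ℝ) : EReal) := by
  obtain ⟨d, hdd⟩ : ∃ d, d = z1 - xb := ⟨_, rfl⟩
  have hd : d ≠ 0 := by rw [hdd]; exact sub_ne_zero_of_ne hne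
  have hdabs : 0 < |d| := abs_pos.2 hd
  -- lower semicontinuity neighborhood
  have hlb : ((α*xb - c - δ/4 : ℝ) : EReal) < g0 xb :=
    lt_of_lt_of_le (EReal.coe_lt_coe_iff.2 (by linarith)) (hge xb)
  obtain ⟨η, hη0, hball⟩ := Metric.eventually_nhds_iff.1 (hlsc xb _ hlb)
  obtain ⟨K, hK⟩ : ∃ K, K = |v1 + 1| + |α*xb - c| + δ + |α| := ⟨_, rfl⟩
  have hK0 : 0 ≤ K := by rw [hK]; positivity
  obtain ⟨μ, hμ⟩ : ∃ μ, μ = min (1/2) (min (η/(2*|d|)) (δ/(8*(K+1)))) := ⟨_, rfl⟩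
  have hμ0 : 0 < μ := by
    rw [hμ]
    refine lt_min (by norm_num) (lt_min (by positivity) (by positivity))
  have hμhalf : μ ≤ 1/2 := by rw [hμ]; exact min_le_left _ _
  have hμη : μ * |d| ≤ η/2 := by
    have h := hμ.le.trans ((min_le_right _ _).trans (min_le_left _ _))
    rw [le_div_iff₀ (by positivity)] at h
    nlinarith
  have hμK : 3*μ*K ≤ 3*δ/8 := by
    have h := hμ.le.trans ((min_le_right _ _).trans (min_le_right _ _))
    rw [le_div_iff₀ (by positivity)] at h
    nlinarith
  obtain ⟨r, hrr⟩ : ∃ r, r = min (min 1 (δ/(8*(|α|+1)))) (μ*|d|/2) := ⟨_, rfl⟩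
  have hr0 : 0 < r := by
    rw [hrr]; exact lt_min (lt_min one_pos (by positivity)) (by positivity)
  have hr1 : r ≤ 1 := by rw [hrr]; exact (min_le_left _ _).trans (min_le_left _ _)
  have hrα : |α| * r ≤ δ/8 := by
    have h : r ≤ δ/(8*(|α|+1)) := by
      rw [hrr]; exact (min_le_left _ _).trans (min_le_right _ _)
    rw [le_div_iff₀ (by positivity)] at h
    nlinarith [abs_nonneg α]
  have hrd : r ≤ μ*|d|/2 := by rw [hrr]; exact min_le_right _ _
  obtain ⟨w, hw⟩ : ∃ w, w = xb + μ*d := ⟨_, rfl⟩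
  have hwball : dist w xb < η := by
    rw [hw, Real.dist_eq]
    have : |xb + μ*d - xb| = μ * |d| := by
      rw [show xb + μ*d - xb = μ*d by ring, abs_mul, abs_of_pos hμ0]
    rw [this]; linarith
  have hg0w : ((α*xb - c - δ/4 : ℝ) : EReal) < g0 w := hball hwball
  have hev1 : ∀ᶠ n in atTop, ((α*xb - c - δ/4 : ℝ) : EReal) < g n w :=
    (hlim w).eventually_const_lt hg0w
  have hev2 : ∀ᶠ n in atTop, g n z1 < ((v1 + 1 : ℝ) : EReal) :=
    (hlim z1).eventually_lt_const (by rw [hz1]; exact_mod_cast lt_add_one v1)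
  refine ⟨Metric.ball xb r, Metric.ball_mem_nhds xb hr0, ?_⟩
  filter_upwards [hev1, hev2] with n h1 h2
  intro x hx
  rw [Metric.mem_ball, Real.dist_eq] at hx
  obtain ⟨t, htt⟩ : ∃ t, t = x - xb := ⟨_, rfl⟩
  have htr : |t| ≤ μ*|d|/2 := by rw [htt]; exact hx.le.trans hrd
  obtain ⟨ha, haμ, hb, hzx⟩ := coeff_facts d μ t hd hμ0 hμhalf htr
  obtain ⟨a, haq⟩ : ∃ a, a = (μ*d - t)/(d - t) := ⟨_, rfl⟩
  obtain ⟨b, hbq⟩ : ∃ b, b = ((1-μ)*d)/(d - t) := ⟨_, rfl⟩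
  rw [← haq] at ha haμ
  rw [← hbq] at hb
  have hab : a + b = 1 := by
    rw [haq, hbq, ← add_div, show μ*d - t + (1-μ)*d = d - t by ring, div_self hzx]
  have hcomb : a * z1 + b * x = w := by
    rw [haq, hbq, div_mul_eq_mul_div, div_mul_eq_mul_div, ← add_div, div_eq_iff hzx,
      hdd, htt, hw, hdd]
    ring
  have hcvx := hconvn n z1 x a b ha hb.le hab
  rw [hcomb] at hcvx
  have step1 : ((α*xb - c - δ/4 : ℝ) : EReal) ≤ ↑a * g n z1 + ↑b * g n x := h1.le.trans hcvx
  have step2 : (↑a : EReal) * g n z1 ≤ ((a * (v1+1) : ℝ) : EReal) := by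
    rw [EReal.coe_mul]
    exact mul_le_mul_of_nonneg_left h2.le (by exact_mod_cast ha)
  have step3 : ((α*xb - c - δ/4 : ℝ) : EReal) ≤ ((a*(v1+1) : ℝ) : EReal) + ↑b * g n x :=
    step1.trans (add_le_add_left step2 _)
  have step4 : ((α*xb - c - δ/4 - a*(v1+1) : ℝ) : EReal) ≤ ↑b * g n x := by
    rw [show (α*xb - c - δ/4 - a*(v1+1) : ℝ) = (α*xb - c - δ/4) - a*(v1+1) by ring,
      EReal.coe_sub]
    exact EReal.sub_le_of_le_add' step3
  -- real arithmetic
  have eabs : |α*t| ≤ |α| * r := by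
    rw [abs_mul]
    exact mul_le_mul_of_nonneg_left (htt ▸ hx.le) (abs_nonneg α)
  obtain ⟨ht1, ht2⟩ := abs_le.1 eabs
  have e2 : v1 + 1 - (α*xb - c) + δ - α*t ≤ K := by
    have k1 : v1 + 1 ≤ |v1+1| := le_abs_self _
    have k2 : -(α*xb - c) ≤ |α*xb - c| := neg_le_abs _
    have k3 : |α| * r ≤ |α| := by nlinarith [abs_nonneg α]
    rw [hK]; linarith
  have e3 : a*(v1 + 1 - (α*xb - c) + δ - α*t) ≤ a*K := mul_le_mul_of_nonneg_left e2 ha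
  have e4 : a*K ≤ 3*μ*K := mul_le_mul_of_nonneg_right haμ hK0
  have hxt : x = xb + t := by rw [htt]; ring
  have hb1 : b = 1 - a := by linarith
  have key : (α*x - (c+δ)) * b ≤ α*xb - c - δ/4 - a*(v1+1) := by
    rw [hxt, hb1]; linarith [e3, e4, hμK, hrα, ht1]
  have final : ((α*x - (c+δ) : ℝ) : EReal) ≤ g n x := by
    calc ((α*x - (c+δ) : ℝ) : EReal) ≤ ↑((α*xb - c - δ/4 - a*(v1+1))/b) := by
          rw [EReal.coe_le_coe_iff, le_div_iff₀ hb]; exact key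
      _ ≤ g n x := by
          rw [EReal.coe_div, EReal.div_le_iff_le_mul (by exact_mod_cast hb) (EReal.coe_ne_top b)]
          exact step4
  have h5 : ((α*x : ℝ) : EReal) ≤ g n x + ((c + δ : ℝ) : EReal) := by
    have h6 := add_le_add_left final (((c + δ : ℝ)) : EReal)
    rw [← EReal.coe_add, show (α*x - (c+δ)) + (c+δ) = α * x by ring] at h6
    exact h6
  exact EReal.sub_le_of_le_add' h5

lemma farfield_left (g : ℕ → ℝ → EReal) (g0 : ℝ → EReal)
    (hconvn : ∀ n, Cvx (g n))
    (hlim : ∀ x, Tendsto (fun n => g n x) atTop (nhds (g0 x)))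
    (z0 v : ℝ) (hz : g0 z0 = (v : EReal)) (α ε c : ℝ) (hε : 0 < ε)
    (htop : conjE g0 (α - ε) ≠ ⊤) :
    ∃ Y : ℝ, ∀ᶠ n in atTop, ∀ x ≤ Y, ((α * x : ℝ) : EReal) - g n x ≤ (c : EReal) := by
  have hconv' : ∀ n, Cvx (fun x => g n (-x)) := by
    intro n x y a b ha hb hab
    have h := hconvn n (-x) (-y) a b ha hb hab
    rw [show a * (-x) + b * (-y) = -(a*x + b*y) by ring] at h
    exact h
  have hlim' : ∀ x, Tendsto (fun n => g n (-x)) atTop (nhds (g0 (-x))) := fun x => hlim (-x)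
  have hz' : g0 (-(-z0)) = (v : EReal) := by rw [neg_neg]; exact hz
  have htop' : conjE (fun x => g0 (-x)) (-α + ε) ≠ ⊤ := by
    rw [conjE_neg, show -(-α + ε) = α - ε by ring]; exact htop
  obtain ⟨Y, hY⟩ := farfield_right (fun n x => g n (-x)) (fun x => g0 (-x)) hconv' hlim'
    (-z0) v hz' (-α) ε c hε htop'
  refine ⟨-Y, ?_⟩
  filter_upwards [hY] with n hn
  intro x hx
  have h := hn (-x) (by linarith)
  rw [show (-α)*(-x) = α*x by ring, neg_neg] at h
  exact h

/-- Proposition 4.1: if `g_n, g` are closed (lower semicontinuous) proper convex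
functions on `ℝ`, `Int(dom g) ≠ ∅`, and `g_n → g` pointwise on `ℝ`, then the
Legendre conjugates converge, `g_n* → g*`, pointwise on `Int(dom g*)`. -/
theorem conj_tendsto_of_closed (g : ℕ → ℝ → EReal) (g0 : ℝ → EReal)
    (hlscn : ∀ n, LowerSemicontinuous (g n)) (hlsc : LowerSemicontinuous g0)
    (hconvn : ∀ n, Cvx (g n)) (hconv : Cvx g0)
    (hpropern : ∀ n, (∀ x, ⊥ < g n x) ∧ ∃ x, g n x ≠ ⊤)
    (hproper : (∀ x, ⊥ < g0 x) ∧ ∃ x, g0 x ≠ ⊤)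
    (hint : (interior (edom g0)).Nonempty)
    (hlim : ∀ x : ℝ, Tendsto (fun n => g n x) atTop (nhds (g0 x))) :
    ∀ α ∈ interior (edom (conjE g0)), Tendsto (fun n => conjE (g n) α) atTop (nhds (conjE g0 α)) := by
  intro α hα
  obtain ⟨hbot0, hx0top⟩ := hproper
  -- the conjugate value is real
  have hαdom : conjE g0 α ≠ ⊤ := interior_subset hα
  have hαbot : conjE g0 α ≠ ⊥ := conjE_ne_bot g0 α hbot0 hx0top
  set c : ℝ := (conjE g0 α).toReal with hcdef
  have hc : (c : EReal) = conjE g0 α := EReal.coe_toReal hαdom hαbot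
  -- a ball of radius ε around α inside the domain of the conjugate
  obtain ⟨ε, hε0, hball⟩ := Metric.isOpen_iff.1 isOpen_interior α hα
  have htopp : conjE g0 (α + ε/2) ≠ ⊤ := by
    refine interior_subset (hball ?_)
    rw [Metric.mem_ball, Real.dist_eq]
    rw [show α + ε/2 - α = ε/2 by ring, abs_of_pos (by linarith)]
    linarith
  have htopm : conjE g0 (α - ε/2) ≠ ⊤ := by
    refine interior_subset (hball ?_)
    rw [Metric.mem_ball, Real.dist_eq]
    rw [show α - ε/2 - α = -(ε/2) by ring, abs_neg, abs_of_pos (by linarith)]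
    linarith
  -- two points in the interior of the domain of g0 with real values
  obtain ⟨z0, hz0i⟩ := hint
  obtain ⟨τ, hτ0, hτball⟩ := Metric.isOpen_iff.1 isOpen_interior z0 hz0i
  have hz0dom : g0 z0 ≠ ⊤ := interior_subset hz0i
  have hz1i : z0 + τ/2 ∈ interior (edom g0) := by
    refine hτball ?_
    rw [Metric.mem_ball, Real.dist_eq]
    rw [show z0 + τ/2 - z0 = τ/2 by ring, abs_of_pos (by linarith)]
    linarith
  have hz1dom : g0 (z0 + τ/2) ≠ ⊤ := interior_subset hz1i
  set v0 : ℝ := (g0 z0).toReal with hv0def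
  have hv0 : g0 z0 = (v0 : EReal) := (EReal.coe_toReal hz0dom (hbot0 z0).ne').symm
  set v1 : ℝ := (g0 (z0 + τ/2)).toReal with hv1def
  have hv1 : g0 (z0 + τ/2) = (v1 : EReal) := (EReal.coe_toReal hz1dom (hbot0 _).ne').symm
  have hge : ∀ x, ((α * x - c : ℝ) : EReal) ≤ g0 x :=
    ge_affine g0 α c hbot0 (le_of_eq hc.symm)
  -- main convergence
  rw [← hc]
  apply tendsto_of_le_liminf_of_limsup_le
  · rw [hc]; exact lower_half g g0 α hlim
  · -- limsup ≤ c
    rw [← EReal.le_of_forall_lt_iff_le]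
    intro z hz
    rw [EReal.coe_lt_coe_iff] at hz
    set δ : ℝ := z - c with hδdef
    have hδ0 : 0 < δ := by linarith
    have hcz : ((c + δ : ℝ) : EReal) = (z : EReal) := by norm_cast; rw [hδdef]; ring
    -- far field bounds
    obtain ⟨Yp, hYp⟩ := farfield_right g g0 hconvn hlim z0 v0 hv0 α (ε/2) (c + δ)
      (by linarith) htopp
    obtain ⟨Ym, hYm⟩ := farfield_left g g0 hconvn hlim z0 v0 hv0 α (ε/2) (c + δ)
      (by linarith) htopm
    -- local bounds on the compact interval [Ym, Yp]
    have hloc : ∀ xb : ℝ, ∃ U ∈ 𝓝 xb, ∀ᶠ n in atTop, ∀ x ∈ U,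
        ((α * x : ℝ) : EReal) - g n x ≤ ((c + δ : ℝ) : EReal) := by
      intro xb
      by_cases hxb : z0 = xb
      · exact local_bound g g0 hconvn hlsc hlim (z0 + τ/2) v1 hv1 α c δ hδ0 hge xb
          (by intro h; apply hτ0.ne'; linarith [hxb, h])
      · exact local_bound g g0 hconvn hlsc hlim z0 v0 hv0 α c δ hδ0 hge xb hxb
    choose U hU1 hU2 using hloc
    obtain ⟨s, -, hcover⟩ := (isCompact_Icc (a := Ym) (b := Yp)).elim_nhds_subcover U
      (fun xb _ => hU1 xb)
    have hev3 : ∀ᶠ n in atTop, ∀ xb ∈ s, ∀ x ∈ U xb,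
        ((α * x : ℝ) : EReal) - g n x ≤ ((c + δ : ℝ) : EReal) :=
      (eventually_all_finset s).2 (fun xb _ => hU2 xb)
    have hev : ∀ᶠ n in atTop, conjE (g n) α ≤ ((c + δ : ℝ) : EReal) := by
      filter_upwards [hYp, hYm, hev3] with n hp hm hK
      refine iSup_le fun x => ?_
      rcases le_or_gt x Ym with hx1 | hx1
      · exact hm x hx1
      rcases le_or_gt Yp x with hx2 | hx2
      · exact hp x hx2
      have hxI : x ∈ Set.Icc Ym Yp := ⟨hx1.le, hx2.le⟩
      obtain ⟨xb, hxb, hxU⟩ := Set.mem_iUnion₂.1 (hcover hxI)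
      exact hK xb hxb x hxU
    rw [← hcz]
    exact limsup_le_of_le (by isBoundedDefault) hev
  · isBoundedDefault
  · isBoundedDefault
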